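/- In one dimension: if a₁ ≠ a₂ are real numbers and the identity exp(m₁x)·a₁x/(exp(m₁x)+exp(m₂x)) + exp(m₂x)·a₂x/(exp(m₁x)+exp(m₂x)) = exp(m₁'x)·a₁'x/(exp(m₁'x)+exp(m₂'x)) + exp(m₂'x)·a₂'x/(exp(m₁'x)+exp(m₂'x)) holds for all x ∈ ℝ, with m₂ = m₂' = 0, m₁, m₁' > 0, and a₁' ≠ a₂', then m₁ = m₁', a₁ = a₁', and a₂ = a₂'. -/

import Mathlib

open Real Filter Topology

/-- One-dimensional `N = 2` identifiability of softmax-gated mixtures of linear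
experts, normalized so that the last gating parameter is `0`. -/
theorem softmax_linear_mixture_identifiable_1d
    (m₁ m₂ m₁' m₂' a₁ a₂ a₁' a₂' : ℝ)
    (hm₂ : m₂ = 0) (hm₂' : m₂' = 0)
    (hm₁ : 0 < m₁) (hm₁' : 0 < m₁')
    (ha : a₁ ≠ a₂) (ha' : a₁' ≠ a₂')
    (h : ∀ x : ℝ,
        Real.exp (m₁ * x) * (a₁ * x) / (Real.exp (m₁ * x) + Real.exp (m₂ * x))
          + Real.exp (m₂ * x) * (a₂ * x) / (Real.exp (m₁ * x) + Real.exp (m₂ * x))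
        = Real.exp (m₁' * x) * (a₁' * x) / (Real.exp (m₁' * x) + Real.exp (m₂' * x))
          + Real.exp (m₂' * x) * (a₂' * x) / (Real.exp (m₁' * x) + Real.exp (m₂' * x))) :
    m₁ = m₁' ∧ a₁ = a₁' ∧ a₂ = a₂' := by
  subst hm₂ hm₂'
  -- key identity, valid for x ≠ 0
  have key : ∀ x : ℝ, x ≠ 0 →
      (a₁ * exp (m₁ * x) + a₂) * (exp (m₁' * x) + 1)
        = (a₁' * exp (m₁' * x) + a₂') * (exp (m₁ * x) + 1) := by
    intro x hx
    have h1 : (0:ℝ) < exp (m₁ * x) + exp (0 * x) := by positivity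
    have h2 : (0:ℝ) < exp (m₁' * x) + exp (0 * x) := by positivity
    have hx' := h x
    rw [← add_div, ← add_div, div_eq_div_iff h1.ne' h2.ne'] at hx'
    simp only [zero_mul, exp_zero] at hx'
    have h3 : x * ((a₁ * exp (m₁ * x) + a₂) * (exp (m₁' * x) + 1))
        = x * ((a₁' * exp (m₁' * x) + a₂') * (exp (m₁ * x) + 1)) := by
      linear_combination hx'
    exact mul_left_cancel₀ hx h3
  -- limits of exp terms
  have tb : ∀ m : ℝ, 0 < m → Tendsto (fun x : ℝ => exp (m * x)) atBot (nhds 0) := by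
    intro m hm
    apply Real.tendsto_exp_atBot.comp
    exact (tendsto_const_mul_atBot_of_pos hm).mpr tendsto_id
  have tt : ∀ m : ℝ, 0 < m → Tendsto (fun x : ℝ => exp (-(m * x))) atTop (nhds 0) := by
    intro m hm
    apply Real.tendsto_exp_atBot.comp
    apply tendsto_neg_atBot_iff.mpr
    exact (tendsto_const_mul_atTop_of_pos hm).mpr tendsto_id
  -- a₂ = a₂'
  have ha₂ : a₂ = a₂' := by
    have tF : Tendsto (fun x : ℝ => (a₁ * exp (m₁ * x) + a₂) * (exp (m₁' * x) + 1))
        atBot (nhds ((a₁ * 0 + a₂) * (0 + 1))) :=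
      (((tb m₁ hm₁).const_mul a₁).add tendsto_const_nhds).mul
        ((tb m₁' hm₁').add tendsto_const_nhds)
    have tG : Tendsto (fun x : ℝ => (a₁' * exp (m₁' * x) + a₂') * (exp (m₁ * x) + 1))
        atBot (nhds ((a₁' * 0 + a₂') * (0 + 1))) :=
      (((tb m₁' hm₁').const_mul a₁').add tendsto_const_nhds).mul
        ((tb m₁ hm₁).add tendsto_const_nhds)
    have heq : (fun x : ℝ => (a₁ * exp (m₁ * x) + a₂) * (exp (m₁' * x) + 1))
        =ᶠ[atBot] (fun x : ℝ => (a₁' * exp (m₁' * x) + a₂') * (exp (m₁ * x) + 1)) :=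
      (eventually_lt_atBot 0).mono fun x hx => key x hx.ne
    have := tendsto_nhds_unique (tF.congr' heq) tG
    linarith
  -- a₁ = a₁'
  have ha₁ : a₁ = a₁' := by
    have hid : ∀ (b c m m' : ℝ) (x : ℝ),
        exp (-((m + m') * x)) * ((b * exp (m * x) + c) * (exp (m' * x) + 1))
          = (b + c * exp (-(m * x))) * (1 + exp (-(m' * x))) := by
      intro b c m m' x
      rw [show -((m + m') * x) = -(m * x) + -(m' * x) by ring, exp_add, exp_neg, exp_neg]
      field_simp
    have tF : Tendsto (fun x : ℝ => (a₁ + a₂ * exp (-(m₁ * x))) * (1 + exp (-(m₁' * x))))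
        atTop (nhds ((a₁ + a₂ * 0) * (1 + 0))) :=
      (tendsto_const_nhds.add ((tt m₁ hm₁).const_mul a₂)).mul
        (tendsto_const_nhds.add (tt m₁' hm₁'))
    have tG : Tendsto (fun x : ℝ => (a₁' + a₂' * exp (-(m₁' * x))) * (1 + exp (-(m₁ * x))))
        atTop (nhds ((a₁' + a₂' * 0) * (1 + 0))) :=
      (tendsto_const_nhds.add ((tt m₁' hm₁').const_mul a₂')).mul
        (tendsto_const_nhds.add (tt m₁ hm₁))
    have heq : (fun x : ℝ => (a₁ + a₂ * exp (-(m₁ * x))) * (1 + exp (-(m₁' * x))))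
        =ᶠ[atTop] (fun x : ℝ => (a₁' + a₂' * exp (-(m₁' * x))) * (1 + exp (-(m₁ * x)))) := by
      refine (eventually_gt_atTop 0).mono fun x hx => ?_
      dsimp only
      rw [← hid a₁ a₂ m₁ m₁' x, ← hid a₁' a₂' m₁' m₁ x,
        show m₁' + m₁ = m₁ + m₁' by ring, key x hx.ne']
    have := tendsto_nhds_unique (tF.congr' heq) tG
    linarith
  -- m₁ = m₁'
  refine ⟨?_, ha₁, ha₂⟩
  have k1 := key 1 one_ne_zero
  rw [← ha₁, ← ha₂] at k1
  have h5 : (a₁ - a₂) * (exp (m₁ * 1) - exp (m₁' * 1)) = 0 := by linear_combination k1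
  rcases mul_eq_zero.mp h5 with h6 | h6
  · exact absurd (sub_eq_zero.mp h6) ha
  · have := Real.exp_eq_exp.mp (sub_eq_zero.mp h6)
    linarith
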